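/- Let B = {0,1}^ℕ with the one-sided shift R and F(x,y) = (R(x), x₀) on B × {0,1}. Let μ be an ergodic shift-invariant probability measure on B, and suppose φ : B → {0,1} is μ-measurable and its graph is an attractor with basin Z × {0,1} for some Z ⊂ B with μ(Z) = 1 (i.e. for every x ∈ Z and y ∈ {0,1}, eventually π₂(Fⁿ(x,y)) = φ(Rⁿ(x))). Then the measure-theoretic entropy h_μ(R) = 0. -/

import Mathlib

open MeasureTheory

/-- The one-sided shift on `{0,1}^ℕ`. -/
def shiftNat (x : ℕ → Bool) : ℕ → Bool := fun n => x (n + 1)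

/-- The skew product `F(x,y) = (R(x), x₀)` over the one-sided shift. -/
def Fcoin (p : (ℕ → Bool) × Bool) : (ℕ → Bool) × Bool := (shiftNat p.1, p.1 0)

/-- The cylinder set determined by a word `w` of length `n`. -/
def cylinder (n : ℕ) (w : Fin n → Bool) : Set (ℕ → Bool) :=
  {x | ∀ i : Fin n, x i = w i}

/-- The measure-theoretic (Kolmogorov–Sinai) entropy of a shift-invariant measure on
`{0,1}^ℕ`, computed via the coordinate partition, which is a one-sided generator:
`h_μ(R) = lim (1/n) H(cylinders of length n)`. -/
noncomputable def shiftEntropy (μ : Measure (ℕ → Bool)) : ℝ :=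
  Filter.atTop.liminf fun n : ℕ =>
    (1 / (n : ℝ)) * ∑ w : Fin n → Bool, Real.negMulLog (μ (cylinder n w)).toReal

section aux


lemma negMulLog_sum_le {ι : Type*} (s : Finset ι) (f : ι → ℝ) (hf : ∀ i ∈ s, 0 ≤ f i) :
    Real.negMulLog (∑ i ∈ s, f i) ≤ ∑ i ∈ s, Real.negMulLog (f i) := by
  have hS : 0 ≤ ∑ i ∈ s, f i := Finset.sum_nonneg hf
  have h1 : Real.negMulLog (∑ i ∈ s, f i) = ∑ i ∈ s, -(f i * Real.log (∑ j ∈ s, f j)) := by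
    rw [Real.negMulLog, neg_mul, Finset.sum_neg_distrib, ← Finset.sum_mul]
  rw [h1]
  refine Finset.sum_le_sum fun i hi => ?_
  rw [Real.negMulLog]
  rcases eq_or_lt_of_le (hf i hi) with h0 | h0
  · simp [← h0]
  · have hle : f i ≤ ∑ j ∈ s, f j := Finset.single_le_sum hf hi
    have := Real.log_le_log h0 hle
    nlinarith

lemma gibbs_ineq {ι : Type*} (s : Finset ι) (p q : ι → ℝ)
    (hp : ∀ i ∈ s, 0 ≤ p i) (hq : ∀ i ∈ s, 0 ≤ q i)
    (hpq : ∀ i ∈ s, 0 < p i → 0 < q i)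
    (hsum : ∑ i ∈ s, q i ≤ ∑ i ∈ s, p i) :
    ∑ i ∈ s, Real.negMulLog (p i) ≤ ∑ i ∈ s, -(p i * Real.log (q i)) := by
  have key : ∀ i ∈ s, Real.negMulLog (p i) ≤ -(p i * Real.log (q i)) + (q i - p i) := by
    intro i hi
    rcases eq_or_lt_of_le (hp i hi) with h0 | h0
    · simp [← h0, Real.negMulLog, hq i hi]
    · have hq0 := hpq i hi h0
      have hlog : Real.log (q i / p i) ≤ q i / p i - 1 :=
        Real.log_le_sub_one_of_pos (div_pos hq0 h0)
      rw [Real.log_div (ne_of_gt hq0) (ne_of_gt h0)] at hlog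
      have := mul_le_mul_of_nonneg_left hlog (le_of_lt h0)
      rw [Real.negMulLog]
      have hne : p i ≠ 0 := ne_of_gt h0
      field_simp at this
      nlinarith
  calc ∑ i ∈ s, Real.negMulLog (p i) ≤ ∑ i ∈ s, (-(p i * Real.log (q i)) + (q i - p i)) :=
        Finset.sum_le_sum key
    _ = ∑ i ∈ s, -(p i * Real.log (q i)) + (∑ i ∈ s, q i - ∑ i ∈ s, p i) := by
        rw [Finset.sum_add_distrib, Finset.sum_sub_distrib]
    _ ≤ ∑ i ∈ s, -(p i * Real.log (q i)) := by linarith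

lemma negMulLog_le_two_sqrt {x : ℝ} (hx : 0 ≤ x) : Real.negMulLog x ≤ 2 * Real.sqrt x := by
  rcases eq_or_lt_of_le hx with h0 | h0
  · simp [← h0, Real.negMulLog]
  · have hs : 0 < Real.sqrt x := Real.sqrt_pos.2 h0
    have hlog : Real.log (Real.sqrt x)⁻¹ ≤ (Real.sqrt x)⁻¹ - 1 :=
      Real.log_le_sub_one_of_pos (by positivity)
    rw [Real.log_inv] at hlog
    have hlx : Real.log x = 2 * Real.log (Real.sqrt x) := by
      rw [Real.log_sqrt hx]; ring
    have hxs : x / Real.sqrt x = Real.sqrt x := Real.div_sqrt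
    rw [Real.negMulLog, hlx]
    have h2 : -Real.log (Real.sqrt x) ≤ (Real.sqrt x)⁻¹ := by linarith
    have h3 : x * -Real.log (Real.sqrt x) ≤ x * (Real.sqrt x)⁻¹ :=
      mul_le_mul_of_nonneg_left h2 hx
    have h4 : x * (Real.sqrt x)⁻¹ = Real.sqrt x := by
      rw [← div_eq_mul_inv]; exact hxs
    nlinarith

lemma negMulLog_one_sub_le {p e : ℝ} (hp : 0 ≤ p) (hpe : p ≤ e) (he : e ≤ 1/2) :
    Real.negMulLog (1 - p) ≤ 2 * e := by
  have ht : (0:ℝ) < 1 - p := by linarith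
  have hlog : Real.log (1 - p)⁻¹ ≤ (1 - p)⁻¹ - 1 :=
    Real.log_le_sub_one_of_pos (by positivity)
  rw [Real.log_inv] at hlog
  have h1 : -Real.log (1 - p) ≤ p / (1 - p) := by
    have : (1 - p)⁻¹ - 1 = p / (1 - p) := by field_simp; ring
    linarith [hlog, this ▸ hlog]
  have h2 : p / (1 - p) ≤ 2 * e := by
    rw [div_le_iff₀ ht]; nlinarith
  have h3 : 0 ≤ -Real.log (1 - p) := by
    rw [← Real.log_inv]
    apply Real.log_nonneg
    rw [le_inv_comm₀] <;> nlinarith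
  rw [Real.negMulLog]
  have h1p : 1 - p ≤ 1 := by linarith
  nlinarith

lemma shiftNat_iterate_apply (s : ℕ) (x : ℕ → Bool) (j : ℕ) :
    (shiftNat^[s]) x j = x (j + s) := by
  induction s generalizing x with
  | zero => rfl
  | succ s ih =>
    rw [Function.iterate_succ_apply, ih]
    show x (j + s + 1) = x (j + (s + 1))
    rw [Nat.add_assoc]

lemma measurable_shiftNat : Measurable shiftNat :=
  measurable_pi_lambda _ fun n => measurable_pi_apply (n + 1)

lemma Fcoin_iterate (n : ℕ) (x : ℕ → Bool) (y : Bool) :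
    Fcoin^[n + 1] (x, y) = (shiftNat^[n + 1] x, x n) := by
  induction n generalizing x y with
  | zero => rfl
  | succ n ih =>
    rw [Function.iterate_succ_apply, show Fcoin (x, y) = (shiftNat x, x 0) from rfl, ih,
      ← Function.iterate_succ_apply]
    simp [shiftNat]

/-- `ψfun φ' x = φ'` applied to the first `m` coordinates of `x`. -/
def ψfun {m : ℕ} (φ' : (Fin m → Bool) → Bool) (x : ℕ → Bool) : Bool :=
  φ' (fun i => x (i : ℕ))

/-- The error bit at position `k`. -/
def errBit {m : ℕ} (φ' : (Fin m → Bool) → Bool) (k : ℕ) (x : ℕ → Bool) : Bool :=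
  xor (x k) (ψfun φ' (shiftNat^[k + 1] x))

/-- Reconstruction: `recon φ' ev n b t` models the sequence `(x_{n-t}, x_{n-t+1}, …)`
reconstructed from error bits `ev` and tail `b = (x_n, x_{n+1}, …)`. -/
def recon {m : ℕ} (φ' : (Fin m → Bool) → Bool) (ev : ℕ → Bool) (n : ℕ) (b : ℕ → Bool) :
    ℕ → ℕ → Bool
  | 0 => b
  | (t + 1) => fun j =>
      if j = 0 then xor (ev (n - (t + 1))) (φ' (fun i => recon φ' ev n b t (i : ℕ)))
      else recon φ' ev n b t (j - 1)

lemma recon_eq {m : ℕ} (φ' : (Fin m → Bool) → Bool) (n : ℕ) (x : ℕ → Bool) :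
    ∀ t, t ≤ n → ∀ j, recon φ' (fun k => errBit φ' k x) n (fun j => x (n + j)) t j
      = x (n - t + j) := by
  intro t
  induction t with
  | zero => intro _ j; simp [recon]
  | succ t ih =>
    intro ht j
    have ht' : t ≤ n := Nat.le_of_succ_le ht
    by_cases hj : j = 0
    · subst hj
      simp only [recon, if_pos rfl]
      have h1 : ∀ i : Fin m, recon φ' (fun k => errBit φ' k x) n (fun j => x (n + j)) t (i : ℕ)
          = x (n - t + (i : ℕ)) := fun i => ih ht' _
      have h2 : (fun i : Fin m => recon φ' (fun k => errBit φ' k x) n (fun j => x (n + j)) t (i : ℕ))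
          = fun i : Fin m => (shiftNat^[n - t] x) (i : ℕ) := by
        funext i; rw [h1 i, shiftNat_iterate_apply, Nat.add_comm]
      rw [h2]
      have h3 : n - t = (n - (t + 1)) + 1 := by omega
      show xor (errBit φ' (n - (t+1)) x) (ψfun φ' (shiftNat^[n - t] x)) = _
      rw [errBit, h3]
      rcases Bool.dichotomy (ψfun φ' (shiftNat^[n - (t+1) + 1] x)) with h | h <;>
        rcases Bool.dichotomy (x (n - (t+1))) with h' | h' <;>
        simp [h, h', Nat.add_zero]
    · have hj1 : j - 1 + 1 = j := Nat.succ_pred_eq_of_pos (Nat.pos_of_ne_zero hj)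
      simp only [recon, if_neg hj]
      rw [ih ht' (j - 1)]
      congr 1
      omega

lemma recon_ev_congr {m : ℕ} (φ' : (Fin m → Bool) → Bool) (n : ℕ) (hn : 0 < n)
    (ev1 ev2 b : ℕ → Bool) (hev : ∀ i < n, ev1 i = ev2 i) :
    ∀ t, t ≤ n → ∀ j, recon φ' ev1 n b t j = recon φ' ev2 n b t j := by
  intro t
  induction t with
  | zero => intro _ j; rfl
  | succ t ih =>
    intro ht j
    have ht' : t ≤ n := Nat.le_of_succ_le ht
    by_cases hj : j = 0
    · subst hj
      simp only [recon, if_pos rfl]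
      rw [hev _ (by omega)]
      have : (fun i : Fin m => recon φ' ev1 n b t (i : ℕ))
          = fun i : Fin m => recon φ' ev2 n b t (i : ℕ) := funext fun i => ih ht' _
      rw [this]
      simp
    · simp only [recon, if_neg hj]
      exact ih ht' _

/-- Extend a finite word to an infinite sequence by `false`. -/
def extendF {n : ℕ} (w : Fin n → Bool) : ℕ → Bool :=
  fun j => if h : j < n then w ⟨j, h⟩ else false

/-- The reconstruction map on finite data. -/
def reconW (n : ℕ) {m : ℕ} (φ' : (Fin m → Bool) → Bool)
    (v : (Fin n → Bool) × (Fin m → Bool)) : Fin n → Bool :=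
  fun k => recon φ' (extendF v.1) n (extendF v.2) n (k : ℕ)

lemma reconW_spec (n m : ℕ) (φ' : (Fin m → Bool) → Bool) (x : ℕ → Bool) :
    (fun k : Fin n => x (k : ℕ))
      = reconW n φ' (fun k => errBit φ' (k : ℕ) x, fun i : Fin m => x (n + (i : ℕ))) := by
  funext k
  have hn : 0 < n := k.pos
  set xb : ℕ → Bool := fun j => if j < n + m then x j else false with hxb
  have hblock : extendF (fun i : Fin m => x (n + (i : ℕ))) = fun j => xb (n + j) := by
    funext j
    simp only [extendF, hxb]
    by_cases hj : j < m
    · rw [dif_pos hj, if_pos (by omega)]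
    · rw [dif_neg hj, if_neg (by omega)]
  have herr : ∀ i < n, errBit φ' i xb = errBit φ' i x := by
    intro i hi
    simp only [errBit, ψfun]
    have h1 : xb i = x i := if_pos (by omega)
    have h2 : (fun j : Fin m => (shiftNat^[i+1] xb) (j : ℕ))
        = fun j : Fin m => (shiftNat^[i+1] x) (j : ℕ) := by
      funext j
      rw [shiftNat_iterate_apply, shiftNat_iterate_apply]
      exact if_pos (by omega)
    rw [h1, h2]
  have hev : ∀ i < n, extendF (fun k : Fin n => errBit φ' (k : ℕ) x) i = errBit φ' i xb := by
    intro i hi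
    simp only [extendF]
    rw [dif_pos hi, herr i hi]
  calc x (k : ℕ) = xb (n - n + (k : ℕ)) := by
        simp only [hxb, Nat.sub_self, Nat.zero_add]
        rw [if_pos (by omega)]
    _ = recon φ' (fun i => errBit φ' i xb) n (fun j => xb (n + j)) n (k : ℕ) :=
        (recon_eq φ' n xb n le_rfl (k : ℕ)).symm
    _ = reconW n φ' (fun k => errBit φ' (k : ℕ) x, fun i : Fin m => x (n + (i : ℕ))) k := by
        rw [reconW, hblock]
        exact (recon_ev_congr φ' n hn _ _ _ hev n le_rfl (k : ℕ)).symm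

lemma measurable_ψfun {m : ℕ} (φ' : (Fin m → Bool) → Bool) : Measurable (ψfun φ') :=
  (measurable_of_countable φ').comp (measurable_pi_lambda _ fun i => measurable_pi_apply _)

lemma measurable_errBit {m : ℕ} (φ' : (Fin m → Bool) → Bool) (k : ℕ) :
    Measurable (errBit φ' k) := by
  have h1 : Measurable fun x : ℕ → Bool => x k := measurable_pi_apply k
  have h2 : Measurable fun x : ℕ → Bool => ψfun φ' (shiftNat^[k + 1] x) :=
    (measurable_ψfun φ').comp (measurable_shiftNat.iterate (k + 1))
  exact (measurable_of_countable fun p : Bool × Bool => xor p.1 p.2).comp (h1.prodMk h2)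

lemma meas_preimage_finset_toReal {α γ : Type*} [MeasurableSpace α] [MeasurableSpace γ]
    [MeasurableSingletonClass γ] (μ : Measure α) [IsFiniteMeasure μ] {V : α → γ}
    (hV : Measurable V) (T : Finset γ) :
    (μ (V ⁻¹' ↑T)).toReal = ∑ v ∈ T, (μ (V ⁻¹' {v})).toReal := by
  have h1 : V ⁻¹' ↑T = ⋃ v ∈ T, V ⁻¹' {v} := by ext x; simp
  rw [h1, measure_biUnion_finset ?_ fun v _ => hV (measurableSet_singleton v),
    ENNReal.toReal_sum fun v _ => measure_ne_top μ _]
  intro a _ b _ hab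
  exact Set.disjoint_left.2 fun x hxa hxb => hab (by
    simp only [Set.mem_preimage, Set.mem_singleton_iff] at hxa hxb
    rw [← hxa, ← hxb])

theorem entropy_core (μ : Measure (ℕ → Bool)) [IsProbabilityMeasure μ] (n m : ℕ)
    (φ' : (Fin m → Bool) → Bool) :
    ∑ w : Fin n → Bool, Real.negMulLog (μ (_root_.cylinder n w)).toReal
      ≤ (m : ℝ) * Real.log 2 + ∑ k : Fin n,
        (Real.negMulLog (μ {x | errBit φ' (k : ℕ) x = true}).toReal
          + Real.negMulLog (μ {x | errBit φ' (k : ℕ) x = false}).toReal) := by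
  classical
  set V : (ℕ → Bool) → (Fin n → Bool) × (Fin m → Bool) :=
    fun x => (fun k => errBit φ' (k : ℕ) x, fun i : Fin m => x (n + (i : ℕ))) with hVdef
  have hV : Measurable V := by
    apply Measurable.prodMk
    · exact measurable_pi_lambda _ fun k => measurable_errBit φ' (k : ℕ)
    · exact measurable_pi_lambda _ fun i => measurable_pi_apply _
  set p : (Fin n → Bool) × (Fin m → Bool) → ℝ := fun v => (μ (V ⁻¹' {v})).toReal with hpdef
  have hp0 : ∀ v, 0 ≤ p v := fun v => ENNReal.toReal_nonneg
  set a : Fin n → Bool → ℝ := fun k c => (μ {x | errBit φ' (k : ℕ) x = c}).toReal with hadef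
  have ha0 : ∀ k c, 0 ≤ a k c := fun k c => ENNReal.toReal_nonneg
  -- marginal identities
  have hmarg : ∀ (k : Fin n) (c : Bool),
      a k c = ∑ v ∈ Finset.univ.filter (fun v : (Fin n → Bool) × (Fin m → Bool) => v.1 k = c), p v := by
    intro k c
    have hset : {x | errBit φ' (k : ℕ) x = c}
        = V ⁻¹' ↑(Finset.univ.filter (fun v : (Fin n → Bool) × (Fin m → Bool) => v.1 k = c)) := by
      ext x
      simp [hVdef]
    rw [hadef]
    simp only
    rw [hset, meas_preimage_finset_toReal μ hV]
  have hsum1 : ∑ v, p v = 1 := by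
    have h := meas_preimage_finset_toReal μ hV (Finset.univ)
    rw [Finset.coe_univ, Set.preimage_univ, measure_univ, ENNReal.toReal_one] at h
    exact h.symm
  have habc : ∀ k : Fin n, a k true + a k false = 1 := by
    intro k
    have hcompl : {x | errBit φ' (k : ℕ) x = false} = {x | errBit φ' (k : ℕ) x = true}ᶜ := by
      ext x; simp
    have hms : MeasurableSet {x | errBit φ' (k : ℕ) x = true} :=
      (measurable_errBit φ' (k : ℕ)) (measurableSet_singleton true)
    have := measure_add_measure_compl (μ := μ) hms
    rw [measure_univ] at this
    rw [hadef]
    simp only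
    rw [hcompl, ← ENNReal.toReal_add (measure_ne_top μ _) (measure_ne_top μ _), this,
      ENNReal.toReal_one]
  -- the q distribution
  set q : (Fin n → Bool) × (Fin m → Bool) → ℝ :=
    fun v => (1/2 : ℝ) ^ m * ∏ k : Fin n, a k (v.1 k) with hqdef
  have hq0 : ∀ v, 0 ≤ q v := by
    intro v
    apply mul_nonneg (by positivity)
    exact Finset.prod_nonneg fun k _ => ha0 k _
  have hple : ∀ (v) (k : Fin n), p v ≤ a k (v.1 k) := by
    intro v k
    rw [hpdef, hadef]
    simp only
    apply ENNReal.toReal_mono (measure_ne_top μ _)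
    apply measure_mono
    intro x hx
    simp only [Set.mem_preimage, Set.mem_singleton_iff] at hx
    simp only [Set.mem_setOf_eq, ← hx]
    rfl
  have hpq : ∀ v, 0 < p v → 0 < q v := by
    intro v hv
    apply mul_pos (by positivity)
    exact Finset.prod_pos fun k _ => lt_of_lt_of_le hv (hple v k)
  have hqsum : ∑ v, q v = 1 := by
    rw [hqdef]
    simp only
    rw [Fintype.sum_prod_type]
    have hinner : ∀ e : Fin n → Bool,
        ∑ _b : Fin m → Bool, (1/2 : ℝ) ^ m * ∏ k : Fin n, a k (e k)
          = (∏ k : Fin n, a k (e k)) := by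
      intro e
      rw [Finset.sum_const, Finset.card_univ, Fintype.card_fun]
      simp only [Fintype.card_fin, Fintype.card_bool, nsmul_eq_mul]
      rw [← mul_assoc]
      have h2 : (((2:ℕ) ^ m : ℕ) : ℝ) * (1/2 : ℝ) ^ m = 1 := by
        push_cast
        rw [one_div, inv_pow, mul_inv_cancel₀ (by positivity)]
      rw [h2, one_mul]
    rw [Finset.sum_congr rfl fun e _ => hinner e]
    have := Finset.prod_univ_sum (fun _ : Fin n => (Finset.univ : Finset Bool)) (fun k c => a k c)
    rw [Fintype.piFinset_univ] at this
    rw [← this]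
    have : ∀ k : Fin n, ∑ c : Bool, a k c = 1 := by
      intro k
      rw [Fintype.sum_bool, habc k]
    rw [Finset.prod_congr rfl fun k _ => this k, Finset.prod_const_one]
  -- Step A : superadditivity
  have stepA : ∑ w : Fin n → Bool, Real.negMulLog (μ (_root_.cylinder n w)).toReal
      ≤ ∑ v, Real.negMulLog (p v) := by
    have hcyl : ∀ w : Fin n → Bool, (μ (_root_.cylinder n w)).toReal
        = ∑ v ∈ Finset.univ.filter (fun v => reconW n φ' v = w), p v := by
      intro w
      have hset : _root_.cylinder n w
          = V ⁻¹' ↑(Finset.univ.filter (fun v => reconW n φ' v = w)) := by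
        ext x
        simp only [_root_.cylinder, Set.mem_setOf_eq, Set.mem_preimage, Finset.coe_filter,
          Finset.mem_univ, true_and, Set.mem_setOf_eq]
        constructor
        · intro h
          rw [← reconW_spec n m φ' x]
          exact funext fun i => h i
        · intro h i
          have := congrFun h i
          rw [← reconW_spec n m φ' x] at this
          exact this
      rw [hset, meas_preimage_finset_toReal μ hV]
    calc ∑ w : Fin n → Bool, Real.negMulLog (μ (_root_.cylinder n w)).toReal
        = ∑ w : Fin n → Bool, Real.negMulLog
            (∑ v ∈ Finset.univ.filter (fun v => reconW n φ' v = w), p v) := by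
          exact Finset.sum_congr rfl fun w _ => by rw [hcyl w]
      _ ≤ ∑ w : Fin n → Bool, ∑ v ∈ Finset.univ.filter (fun v => reconW n φ' v = w),
            Real.negMulLog (p v) :=
          Finset.sum_le_sum fun w _ => negMulLog_sum_le _ _ fun v _ => hp0 v
      _ = ∑ v, Real.negMulLog (p v) := Finset.sum_fiberwise _ _ _
  -- Step B : Gibbs
  have stepB : ∑ v, Real.negMulLog (p v) ≤ ∑ v, -(p v * Real.log (q v)) :=
    gibbs_ineq _ p q (fun v _ => hp0 v) (fun v _ => hq0 v) (fun v _ => hpq v)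
      (by rw [hqsum, hsum1])
  -- Step C : evaluate
  have stepC : ∑ v, -(p v * Real.log (q v))
      = (m : ℝ) * Real.log 2 + ∑ k : Fin n,
        (Real.negMulLog (a k true) + Real.negMulLog (a k false)) := by
    have hterm : ∀ v, -(p v * Real.log (q v))
        = p v * ((m : ℝ) * Real.log 2) + ∑ k : Fin n, -(p v * Real.log (a k (v.1 k))) := by
      intro v
      rcases eq_or_lt_of_le (hp0 v) with h0 | h0
      · simp [← h0]
      · have hak : ∀ k : Fin n, a k (v.1 k) ≠ 0 :=
          fun k => ne_of_gt (lt_of_lt_of_le h0 (hple v k))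
        have hprod : ∏ k : Fin n, a k (v.1 k) ≠ 0 :=
          Finset.prod_ne_zero_iff.2 fun k _ => hak k
        have hlogq : Real.log (q v)
            = (m : ℝ) * (-Real.log 2) + ∑ k : Fin n, Real.log (a k (v.1 k)) := by
          rw [hqdef]
          simp only
          rw [Real.log_mul (by positivity) hprod, Real.log_prod fun k _ => hak k,
            Real.log_pow, one_div, Real.log_inv]
        have hsplit : ∑ k : Fin n, -(p v * Real.log (a k (v.1 k)))
            = -(p v * ∑ k : Fin n, Real.log (a k (v.1 k))) := by
          rw [Finset.mul_sum, Finset.sum_neg_distrib]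
        rw [hlogq, hsplit]
        ring
    calc ∑ v, -(p v * Real.log (q v))
        = ∑ v, (p v * ((m:ℝ) * Real.log 2)
            + ∑ k : Fin n, -(p v * Real.log (a k (v.1 k)))) :=
          Finset.sum_congr rfl fun v _ => hterm v
      _ = (∑ v, p v) * ((m:ℝ) * Real.log 2)
            + ∑ k : Fin n, ∑ v, -(p v * Real.log (a k (v.1 k))) := by
          rw [Finset.sum_add_distrib, ← Finset.sum_mul, Finset.sum_comm]
      _ = (m:ℝ) * Real.log 2 + ∑ k : Fin n,
            (Real.negMulLog (a k true) + Real.negMulLog (a k false)) := by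
          rw [hsum1, one_mul]
          congr 1
          refine Finset.sum_congr rfl fun k _ => ?_
          have hfib := Finset.sum_fiberwise (Finset.univ : Finset ((Fin n → Bool) × (Fin m → Bool)))
            (fun v => v.1 k) (fun v => -(p v * Real.log (a k (v.1 k))))
          rw [← hfib, Fintype.sum_bool]
          have hc : ∀ c : Bool, ∑ v ∈ Finset.univ.filter
              (fun v : (Fin n → Bool) × (Fin m → Bool) => v.1 k = c),
              -(p v * Real.log (a k (v.1 k))) = Real.negMulLog (a k c) := by
            intro c
            have hcong : ∀ v ∈ Finset.univ.filter
                (fun v : (Fin n → Bool) × (Fin m → Bool) => v.1 k = c),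
                -(p v * Real.log (a k (v.1 k))) = -(p v * Real.log (a k c)) := by
              intro v hv
              rw [Finset.mem_filter] at hv
              rw [hv.2]
            rw [Finset.sum_congr rfl hcong, Finset.sum_neg_distrib, ← Finset.sum_mul,
              ← hmarg k c, Real.negMulLog, neg_mul]
          rw [hc true, hc false]
  calc ∑ w : Fin n → Bool, Real.negMulLog (μ (_root_.cylinder n w)).toReal
      ≤ ∑ v, Real.negMulLog (p v) := stepA
    _ ≤ ∑ v, -(p v * Real.log (q v)) := stepB
    _ = (m : ℝ) * Real.log 2 + ∑ k : Fin n,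
          (Real.negMulLog (a k true) + Real.negMulLog (a k false)) := stepC
    _ = _ := rfl


/-- The algebra of finite-dimensional cylinder sets. -/
def cylAlg : Set (Set (ℕ → Bool)) :=
  {s | ∃ (m : ℕ) (T : Set (Fin m → Bool)), s = (fun (x : ℕ → Bool) (i : Fin m) => x (i : ℕ)) ⁻¹' T}

lemma cylAlg_lift {m1 m2 : ℕ} (h : m1 ≤ m2) (T : Set (Fin m1 → Bool)) :
    (fun (x : ℕ → Bool) (i : Fin m1) => x (i : ℕ)) ⁻¹' T
      = (fun (x : ℕ → Bool) (i : Fin m2) => x (i : ℕ)) ⁻¹'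
        {b : Fin m2 → Bool | (fun i : Fin m1 => b (Fin.castLE h i)) ∈ T} := by
  ext x
  simp only [Set.mem_preimage, Set.mem_setOf_eq]
  have : (fun i : Fin m1 => x ((Fin.castLE h i : Fin m2) : ℕ)) = fun i : Fin m1 => x (i : ℕ) := by
    funext i
    rfl
  rw [this]

lemma cylAlg_isSetAlgebra : MeasureTheory.IsSetAlgebra cylAlg := by
  constructor
  · exact ⟨0, ∅, by simp⟩
  · rintro s ⟨m, T, rfl⟩
    exact ⟨m, Tᶜ, by rw [Set.preimage_compl]⟩
  · rintro s t ⟨m1, T1, rfl⟩ ⟨m2, T2, rfl⟩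
    refine ⟨max m1 m2, {b : Fin (max m1 m2) → Bool |
      (fun i : Fin m1 => b (Fin.castLE (le_max_left m1 m2) i)) ∈ T1} ∪
      {b : Fin (max m1 m2) → Bool |
      (fun i : Fin m2 => b (Fin.castLE (le_max_right m1 m2) i)) ∈ T2}, ?_⟩
    rw [Set.preimage_union, cylAlg_lift (le_max_left m1 m2) T1,
      cylAlg_lift (le_max_right m1 m2) T2]

lemma cylAlg_generates :
    (inferInstance : MeasurableSpace (ℕ → Bool)) = MeasurableSpace.generateFrom cylAlg := by
  refine le_antisymm ?_ (MeasurableSpace.generateFrom_le ?_)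
  · rw [show (inferInstance : MeasurableSpace (ℕ → Bool)) = MeasurableSpace.pi from rfl,
      MeasurableSpace.pi]
    refine iSup_le fun i => ?_
    rintro s ⟨t, -, rfl⟩
    apply MeasurableSpace.measurableSet_generateFrom
    refine ⟨i + 1, {b : Fin (i+1) → Bool | b ⟨i, Nat.lt_succ_self i⟩ ∈ t}, ?_⟩
    ext x
    simp only [Set.mem_preimage, Set.mem_setOf_eq]
  · rintro s ⟨m, T, rfl⟩
    exact (measurable_pi_lambda _ fun i => measurable_pi_apply _) (T.toFinite.measurableSet)

lemma cyl_approx (μ : Measure (ℕ → Bool)) [IsProbabilityMeasure μ]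
    (φ : (ℕ → Bool) → Bool) (hφ : Measurable φ) {ε : ℝ} (hε : 0 < ε) :
    ∃ (m : ℕ) (φ' : (Fin m → Bool) → Bool),
      μ {x | φ x ≠ φ' (fun i : Fin m => x (i : ℕ))} ≤ ENNReal.ofReal ε := by
  classical
  have hdense : μ.MeasureDense cylAlg :=
    Measure.MeasureDense.of_generateFrom_isSetAlgebra_finite μ cylAlg_isSetAlgebra cylAlg_generates
  have hs : MeasurableSet (φ ⁻¹' {true}) := hφ (measurableSet_singleton true)
  obtain ⟨t, ⟨m, T, rfl⟩, hlt⟩ := hdense.approx (φ ⁻¹' {true}) hs (measure_ne_top μ _) ε hε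
  refine ⟨m, fun b => decide (b ∈ T), ?_⟩
  refine le_trans (measure_mono ?_) (le_of_lt hlt)
  intro x hx
  simp only [Set.mem_setOf_eq] at hx
  simp only [Set.symmDiff_def, Set.mem_union, Set.mem_diff, Set.mem_preimage,
    Set.mem_singleton_iff]
  rcases Bool.dichotomy (φ x) with h | h
  · -- φ x = false : x must be in t \ s
    rw [h] at hx
    right
    have hmem : (fun i : Fin m => x (i : ℕ)) ∈ T := by
      by_contra hT
      exact hx (by simp [hT])
    exact ⟨hmem, by simp [h]⟩
  · -- φ x = true : x ∈ s \ t
    rw [h] at hx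
    left
    refine ⟨h, fun hmem => hx (by simp [hmem])⟩

lemma entropy_le_nlog2 (μ : Measure (ℕ → Bool)) [IsProbabilityMeasure μ] (n : ℕ) :
    ∑ w : Fin n → Bool, Real.negMulLog (μ (cylinder n w)).toReal ≤ (n : ℝ) * Real.log 2 := by
  classical
  set W : (ℕ → Bool) → (Fin n → Bool) := fun x => (fun i : Fin n => x (i : ℕ)) with hW
  have hWm : Measurable W := measurable_pi_lambda _ fun i => measurable_pi_apply _
  have hcyl : ∀ w, cylinder n w = W ⁻¹' {w} := by
    intro w
    ext x
    simp only [Set.mem_preimage, Set.mem_singleton_iff, hW, funext_iff]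
    exact Iff.rfl
  have hsum1 : ∑ w : Fin n → Bool, (μ (cylinder n w)).toReal = 1 := by
    have h := meas_preimage_finset_toReal μ hWm (Finset.univ)
    rw [Finset.coe_univ, Set.preimage_univ, measure_univ, ENNReal.toReal_one] at h
    rw [Finset.sum_congr rfl fun w _ => by rw [hcyl w]]
    exact h.symm
  have hgibbs := gibbs_ineq Finset.univ (fun w : Fin n → Bool => (μ (cylinder n w)).toReal)
    (fun _ => (1/2 : ℝ)^n) (fun _ _ => ENNReal.toReal_nonneg) (fun _ _ => by positivity)
    (fun _ _ _ => by positivity) ?_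
  · refine le_trans hgibbs (le_of_eq ?_)
    have : ∀ w : Fin n → Bool, -((μ (cylinder n w)).toReal * Real.log ((1/2:ℝ)^n))
        = (μ (cylinder n w)).toReal * ((n:ℝ) * Real.log 2) := by
      intro w
      rw [Real.log_pow, one_div, Real.log_inv]
      ring
    rw [Finset.sum_congr rfl fun w _ => this w, ← Finset.sum_mul, hsum1, one_mul]
  · rw [hsum1, Finset.sum_const, Finset.card_univ, Fintype.card_fun]
    simp only [Fintype.card_fin, Fintype.card_bool, nsmul_eq_mul]
    push_cast
    rw [one_div, inv_pow, mul_inv_cancel₀ (by positivity)]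


end aux

/-- Theorem (model): if `μ` is an ergodic shift-invariant probability measure on
`{0,1}^ℕ` and there is a μ-measurable `φ` whose graph is an attractor for
`F(x,y) = (R(x), x₀)` with basin `Z × {0,1}`, `μ(Z) = 1`, then `h_μ(R) = 0`. -/
theorem measurable_attractor_implies_zero_entropy
    (μ : Measure (ℕ → Bool)) [IsProbabilityMeasure μ]
    (herg : Ergodic shiftNat μ)
    (φ : (ℕ → Bool) → Bool) (hφ : Measurable φ)
    (Z : Set (ℕ → Bool)) (hZ : μ Z = 1)
    (hattr : ∀ x ∈ Z, ∀ y : Bool, ∃ N : ℕ, ∀ n ≥ N,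
      (Fcoin^[n] (x, y)).2 = φ (shiftNat^[n] x)) :
    shiftEntropy μ = 0 := by
  classical
  have hmp : MeasurePreserving shiftNat μ μ := herg.toMeasurePreserving
  -- ### Step 1 : almost everywhere determinism
  set A : Set (ℕ → Bool) := {x | x 0 = φ (shiftNat x)} with hAdef
  have hAmeas : MeasurableSet A := by
    have h1 : Measurable fun x : ℕ → Bool => x 0 := measurable_pi_apply 0
    have h2 : Measurable fun x => φ (shiftNat x) := hφ.comp measurable_shiftNat
    have : A = (fun x => ((x 0 : Bool), φ (shiftNat x))) ⁻¹' {p : Bool × Bool | p.1 = p.2} := rfl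
    rw [this]
    exact (h1.prodMk h2) ((Set.toFinite _).measurableSet)
  set C : Set (ℕ → Bool) := ⋂ k, (shiftNat^[k]) ⁻¹' A with hCdef
  have hCmeas : MeasurableSet C :=
    MeasurableSet.iInter fun k => (measurable_shiftNat.iterate k) hAmeas
  have hCmem : ∀ x, x ∈ C ↔ ∀ k, x k = φ (shiftNat^[k+1] x) := by
    intro x
    simp only [hCdef, Set.mem_iInter, Set.mem_preimage, hAdef, Set.mem_setOf_eq]
    apply forall_congr'
    intro k
    rw [shiftNat_iterate_apply, Nat.zero_add, ← Function.iterate_succ_apply' shiftNat k x]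
  have hZsub : Z ⊆ ⋃ N, (shiftNat^[N]) ⁻¹' C := by
    intro x hx
    obtain ⟨N, hN⟩ := hattr x hx false
    refine Set.mem_iUnion.2 ⟨N, ?_⟩
    rw [Set.mem_preimage, hCmem]
    intro k
    have h1 := hN (N + k + 1) (by omega)
    rw [Fcoin_iterate (N + k) x false] at h1
    rw [shiftNat_iterate_apply, ← Function.iterate_add_apply]
    have e1 : k + N = N + k := Nat.add_comm k N
    have e2 : k + 1 + N = N + k + 1 := by omega
    rw [e1, e2]
    exact h1
  have hCsub : ∀ d, C ⊆ (shiftNat^[d]) ⁻¹' C := by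
    intro d x hx
    rw [Set.mem_preimage, hCmem]
    intro k
    rw [shiftNat_iterate_apply, ← Function.iterate_add_apply]
    have h := (hCmem x).1 hx (k + d)
    rw [show k + 1 + d = (k + d) + 1 from by omega]
    exact h
  have hpres : ∀ N, μ ((shiftNat^[N]) ⁻¹' C) = μ C := fun N =>
    (hmp.iterate N).measure_preimage hCmeas.nullMeasurableSet
  have hUnion : μ (⋃ N, (shiftNat^[N]) ⁻¹' C) = μ C := by
    rw [Directed.measure_iUnion ?_]
    · exact le_antisymm (iSup_le fun N => le_of_eq (hpres N))
        (le_iSup_of_le 0 (le_of_eq (hpres 0).symm))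
    · apply Monotone.directed_le
      intro a b hab x hx
      rw [Set.mem_preimage] at hx ⊢
      have : shiftNat^[b] x = shiftNat^[b - a] (shiftNat^[a] x) := by
        rw [← Function.iterate_add_apply]
        congr 1
        omega
      rw [this]
      exact hCsub (b - a) hx
  have hC1 : μ C = 1 := by
    have h2 : μ Z ≤ μ (⋃ N, (shiftNat^[N]) ⁻¹' C) := measure_mono hZsub
    rw [hZ, hUnion] at h2
    exact le_antisymm prob_le_one h2
  have hdet : ∀ k, μ {x | x k ≠ φ (shiftNat^[k+1] x)} = 0 := by
    intro k
    have hsub : {x | x k ≠ φ (shiftNat^[k+1] x)} ⊆ Cᶜ := by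
      intro x hx hxC
      exact hx ((hCmem x).1 hxC k)
    refine measure_mono_null hsub ?_
    rw [measure_compl hCmeas (measure_ne_top μ _), hC1, measure_univ, tsub_self]
  -- ### Step 2 : liminf machinery
  rw [shiftEntropy]
  set a : ℕ → ℝ := fun n =>
    (1 / (n : ℝ)) * ∑ w : Fin n → Bool, Real.negMulLog (μ (cylinder n w)).toReal with hadef
  have hterm_nonneg : ∀ (n : ℕ) (w : Fin n → Bool),
      0 ≤ Real.negMulLog (μ (cylinder n w)).toReal := by
    intro n w
    apply Real.negMulLog_nonneg ENNReal.toReal_nonneg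
    have := ENNReal.toReal_mono ENNReal.one_ne_top (prob_le_one (μ := μ) (s := cylinder n w))
    rwa [ENNReal.toReal_one] at this
  have ha_nonneg : ∀ n, 0 ≤ a n := fun n =>
    mul_nonneg (by positivity) (Finset.sum_nonneg fun w _ => hterm_nonneg n w)
  have ha_le : ∀ n, a n ≤ Real.log 2 := by
    intro n
    rcases Nat.eq_zero_or_pos n with h0 | h0
    · subst h0
      simp only [hadef, Nat.cast_zero, div_zero, zero_mul]
      exact Real.log_nonneg one_le_two
    · have hnR : (0:ℝ) < n := by exact_mod_cast h0
      have := entropy_le_nlog2 μ n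
      calc a n ≤ (1 / (n:ℝ)) * ((n:ℝ) * Real.log 2) :=
            mul_le_mul_of_nonneg_left this (by positivity)
        _ = Real.log 2 := by field_simp
  have hbdd_ge : Filter.IsBoundedUnder (· ≥ ·) Filter.atTop a :=
    Filter.isBoundedUnder_of ⟨0, fun n => ha_nonneg n⟩
  have hbdd_le : Filter.IsBoundedUnder (· ≤ ·) Filter.atTop a :=
    Filter.isBoundedUnder_of ⟨Real.log 2, fun n => ha_le n⟩
  -- ### Step 3 : liminf ≤ c for every positive c
  have hle : ∀ c : ℝ, 0 < c → Filter.atTop.liminf a ≤ c := by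
    intro c hc
    set ε' : ℝ := min (1/2) (min (c/8) ((c/8)^2)) with hε'def
    have hε'pos : 0 < ε' := lt_min (by norm_num) (lt_min (by positivity) (by positivity))
    have hε'half : ε' ≤ 1/2 := min_le_left _ _
    obtain ⟨m, φ', hφ'⟩ := cyl_approx μ φ hφ hε'pos
    -- error measure bound
    have herr : ∀ k : ℕ, (μ {x | errBit φ' k x = true}).toReal ≤ ε' := by
      intro k
      have hsub : {x | errBit φ' k x = true} ⊆ {x | x k ≠ φ (shiftNat^[k+1] x)}
          ∪ (shiftNat^[k+1]) ⁻¹' {x | φ x ≠ ψfun φ' x} := by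
        intro x hx
        simp only [Set.mem_setOf_eq, errBit] at hx
        have hne : x k ≠ ψfun φ' (shiftNat^[k+1] x) := by
          intro he
          rw [he] at hx
          simp at hx
        by_cases h : x k = φ (shiftNat^[k+1] x)
        · right
          rw [Set.mem_preimage, Set.mem_setOf_eq]
          rw [h] at hne
          exact hne
        · exact Or.inl h
      have hGmeas : NullMeasurableSet {x | φ x ≠ ψfun φ' x} μ := by
        have : {x | φ x ≠ ψfun φ' x}
            = (fun x => ((φ x : Bool), ψfun φ' x)) ⁻¹' {p : Bool × Bool | p.1 ≠ p.2} := rfl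
        rw [this]
        exact ((hφ.prodMk (measurable_ψfun φ')) ((Set.toFinite _).measurableSet)).nullMeasurableSet
      have hμ : μ {x | errBit φ' k x = true} ≤ ENNReal.ofReal ε' := by
        refine le_trans (measure_mono hsub) (le_trans (measure_union_le _ _) ?_)
        rw [hdet k, zero_add, (hmp.iterate (k+1)).measure_preimage hGmeas]
        exact hφ'
      calc (μ {x | errBit φ' k x = true}).toReal
          ≤ (ENNReal.ofReal ε').toReal := ENNReal.toReal_mono ENNReal.ofReal_ne_top hμ
        _ = ε' := ENNReal.toReal_ofReal (le_of_lt hε'pos)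
    -- per coordinate entropy bound
    have hkbound : ∀ k : ℕ, Real.negMulLog (μ {x | errBit φ' k x = true}).toReal
        + Real.negMulLog (μ {x | errBit φ' k x = false}).toReal ≤ c/2 := by
      intro k
      set pk := (μ {x | errBit φ' k x = true}).toReal with hpk
      have hpk0 : 0 ≤ pk := ENNReal.toReal_nonneg
      have hfalse : (μ {x | errBit φ' k x = false}).toReal = 1 - pk := by
        have hcompl : {x | errBit φ' k x = false} = {x | errBit φ' k x = true}ᶜ := by
          ext x
          simp
        have hms : MeasurableSet {x | errBit φ' k x = true} :=
          (measurable_errBit φ' k) (measurableSet_singleton true)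
        rw [hcompl, measure_compl hms (measure_ne_top μ _), measure_univ]
        rw [ENNReal.toReal_sub_of_le (prob_le_one) ENNReal.one_ne_top, ENNReal.toReal_one]
      have h1 : Real.negMulLog pk ≤ c/4 := by
        have := negMulLog_le_two_sqrt hpk0
        have hsq : Real.sqrt pk ≤ c/8 := by
          have h8 : (0:ℝ) ≤ c/8 := by positivity
          calc Real.sqrt pk ≤ Real.sqrt ((c/8)^2) := by
                apply Real.sqrt_le_sqrt
                exact le_trans (herr k) (le_trans (min_le_right _ _) (min_le_right _ _))
            _ = c/8 := by rw [Real.sqrt_sq h8]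
        linarith
      have h2 : Real.negMulLog (1 - pk) ≤ c/4 := by
        have := negMulLog_one_sub_le hpk0 (herr k) hε'half
        have : Real.negMulLog (1 - pk) ≤ 2 * ε' := this
        have hε'c : ε' ≤ c/8 := le_trans (min_le_right _ _) (min_le_left _ _)
        linarith
      rw [hfalse]
      linarith
    -- eventual bound
    have hev : ∀ᶠ n in Filter.atTop, a n ≤ c := by
      rw [Filter.eventually_atTop]
      obtain ⟨N, hN⟩ := exists_nat_gt (max 1 ((m : ℝ) * Real.log 2 / (c/2)))
      refine ⟨N, fun n hn => ?_⟩
      have hnR : (0:ℝ) < n := by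
        have h1 : (1:ℝ) < N := lt_of_le_of_lt (le_max_left _ _) hN
        have : (N:ℝ) ≤ n := by exact_mod_cast hn
        linarith
      have hcore := entropy_core μ n m φ'
      have hsumk : ∑ k : Fin n,
          (Real.negMulLog (μ {x | errBit φ' (k:ℕ) x = true}).toReal
            + Real.negMulLog (μ {x | errBit φ' (k:ℕ) x = false}).toReal)
          ≤ (n:ℝ) * (c/2) := by
        calc _ ≤ ∑ _k : Fin n, c/2 := Finset.sum_le_sum fun k _ => hkbound (k : ℕ)
          _ = (n:ℝ) * (c/2) := by
            rw [Finset.sum_const, Finset.card_univ, Fintype.card_fin, nsmul_eq_mul]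
      have hfrac : (m:ℝ) * Real.log 2 / n ≤ c/2 := by
        rw [div_le_iff₀ hnR]
        have hNn : ((m:ℝ) * Real.log 2) / (c/2) < (n:ℝ) :=
          lt_of_lt_of_le (lt_of_le_of_lt (le_max_right _ _) hN) (by exact_mod_cast hn)
        rw [div_lt_iff₀ (by linarith : (0:ℝ) < c/2)] at hNn
        linarith
      calc a n ≤ (1/(n:ℝ)) * ((m:ℝ) * Real.log 2 + (n:ℝ) * (c/2)) := by
            apply mul_le_mul_of_nonneg_left _ (by positivity)
            exact le_trans hcore (by linarith)
        _ = (m:ℝ) * Real.log 2 / n + c/2 := by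
            field_simp
        _ ≤ c/2 + c/2 := by linarith
        _ = c := by ring
    exact Filter.liminf_le_of_frequently_le hev.frequently hbdd_ge
  have hge : (0:ℝ) ≤ Filter.atTop.liminf a :=
    Filter.le_liminf_of_le hbdd_le.isCoboundedUnder_ge
      (Filter.Eventually.of_forall ha_nonneg)
  have hle0 : Filter.atTop.liminf a ≤ 0 := by
    by_contra h
    push_neg at h
    have := hle (Filter.atTop.liminf a / 2) (by linarith)
    linarith
  linarith
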